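/- Let z ∈ ℝ satisfy z > 1 or z < −3, and let (x_s)_{s≥0} be the sequence defined by x₀ = z and x_{s+1} = (6 + 6z + 3x_s + z²x_s)/(7 + 4z + z² + 2x_s + 2z·x_s). Then for every s ≥ 0 there exists a nonzero real number c_s such that M(z)^{2s+1} = c_s · M(x_s) as 4×4 real matrices. -/

import Mathlib

/-- For a scalar `t`, the 4×4 matrix `[[t,1,1,1],[1,1,t,1],[1,t,1,1],[1,1,1,t]]`. -/
def Mmat (t : ℝ) : Matrix (Fin 4) (Fin 4) ℝ :=
  !![t, 1, 1, 1; 1, 1, t, 1; 1, t, 1, 1; 1, 1, 1, t]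

set_option maxHeartbeats 1000000 in
lemma key (z x : ℝ) (hd0 : (7 + 4*z + z^2 + 2*x + 2*z*x) ≠ 0) :
    Mmat x * Mmat z * Mmat z =
      (7 + 4*z + z^2 + 2*x + 2*z*x) •
        Mmat ((6 + 6*z + 3*x + z^2*x) / (7 + 4*z + z^2 + 2*x + 2*z*x)) := by
  ext i j
  fin_cases i <;> fin_cases j <;>
    simp [Mmat, Matrix.mul_apply, Fin.sum_univ_four] <;>
    norm_num [Matrix.vecHead, Matrix.vecTail, Function.comp] <;>
    (try rw [mul_div_cancel₀ _ hd0]) <;> ring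

/-- for the interpolation sequence `(x_s)` starting at `z` with
`z > 1` or `z < -3`, the odd matrix power `M(z)^(2s+1)` is a nonzero scalar
multiple of `M(x_s)`. -/
theorem stmt8 (z : ℝ) (hz : 1 < z ∨ z < -3) (x : ℕ → ℝ)
    (hx0 : x 0 = z)
    (hxs : ∀ s : ℕ, x (s + 1) =
      (6 + 6 * z + 3 * x s + z ^ 2 * x s) /
        (7 + 4 * z + z ^ 2 + 2 * x s + 2 * z * x s)) :
    ∀ s : ℕ, ∃ c : ℝ, c ≠ 0 ∧ Mmat z ^ (2 * s + 1) = c • Mmat (x s) := by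
  have hdpos : ∀ s : ℕ, 0 < 7 + 4*z + z^2 + 2*(x s) + 2*z*(x s) := by
    rcases hz with h1 | h1
    · -- invariant : 1 < x s
      have hinv : ∀ s, 1 < x s := by
        intro s
        induction s with
        | zero => rw [hx0]; exact h1
        | succ n ih =>
          have hd : 0 < 7 + 4*z + z^2 + 2*(x n) + 2*z*(x n) := by
            nlinarith [mul_pos (by linarith : (0:ℝ) < 2*z+2) (by linarith : (0:ℝ) < x n + 3),
              mul_pos (by linarith : (0:ℝ) < z-1) (by linarith : (0:ℝ) < z-1)]
          rw [hxs n, lt_div_iff₀ hd]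
          nlinarith [mul_pos (mul_pos (by linarith : (0:ℝ) < z-1)
            (by linarith : (0:ℝ) < z-1)) (by linarith : (0:ℝ) < x n - 1)]
      intro s
      have h2 := hinv s
      nlinarith [mul_pos (by linarith : (0:ℝ) < 2*z+2) (by linarith : (0:ℝ) < x s + 3),
        mul_pos (by linarith : (0:ℝ) < z-1) (by linarith : (0:ℝ) < z-1)]
    · -- invariant : x s < -3
      have hinv : ∀ s, x s < -3 := by
        intro s
        induction s with
        | zero => rw [hx0]; exact h1
        | succ n ih =>
          have hd : 0 < 7 + 4*z + z^2 + 2*(x n) + 2*z*(x n) := by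
            nlinarith [mul_pos (by linarith : (0:ℝ) < -2*z-2) (by linarith : (0:ℝ) < 1 - x n),
              mul_pos (by linarith : (0:ℝ) < -3-z) (by linarith : (0:ℝ) < -3-z)]
          rw [hxs n, div_lt_iff₀ hd]
          nlinarith [mul_pos (mul_pos (by linarith : (0:ℝ) < -3-z)
            (by linarith : (0:ℝ) < -3-z)) (by linarith : (0:ℝ) < -3 - x n)]
      intro s
      have h2 := hinv s
      nlinarith [mul_pos (by linarith : (0:ℝ) < -2*z-2) (by linarith : (0:ℝ) < 1 - x s),
        mul_pos (by linarith : (0:ℝ) < -3-z) (by linarith : (0:ℝ) < -3-z)]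
  intro s
  induction s with
  | zero =>
    refine ⟨1, one_ne_zero, ?_⟩
    rw [hx0]; simp
  | succ n ih =>
    obtain ⟨c, hc, heq⟩ := ih
    have hd := hdpos n
    refine ⟨c * (7 + 4*z + z^2 + 2*(x n) + 2*z*(x n)),
      mul_ne_zero hc (ne_of_gt hd), ?_⟩
    have h2 : 2 * (n + 1) + 1 = (2 * n + 1) + 1 + 1 := by ring
    rw [h2, pow_succ, pow_succ, heq, Matrix.smul_mul, Matrix.smul_mul,
      key z (x n) (ne_of_gt hd), hxs n, mul_smul]
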